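/- Let $p>1$, $\epsilon>0$, $b_\epsilon(t) = t(t^2+\epsilon)^{(p-2)/2}$, and $B_\epsilon(t) = \int_0^t b_\epsilon(\tau)\,d\tau$. For every $c > 0$ and every $t > 0$, $m(c,p) \le \frac{t\, b_\epsilon(ct)}{B_\epsilon(t)} \le M(c,p)$, where $m(c,p) := \min\{2c, 2c^{p-1}, pc, pc^{p-1}\}$ and $M(c,p) := \max\{2c, 2c^{p-1}, pc, pc^{p-1}\}$. -/

import Mathlib

open Real in
lemma my_bern1 {x y q : ℝ} (hy : 0 < y) (hxy : y ≤ x) (hq : 1 ≤ q) :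
    x ^ q - y ^ q ≤ q * x ^ (q - 1) * (x - y) := by
  have hx : 0 < x := hy.trans_le hxy
  have hs : (-1:ℝ) ≤ y / x - 1 := by
    have : 0 ≤ y / x := by positivity
    linarith
  have h := one_add_mul_self_le_rpow_one_add hs hq
  rw [show 1 + (y / x - 1) = y / x by ring, Real.div_rpow hy.le hx.le] at h
  have hxq : 0 < x ^ q := Real.rpow_pos_of_pos hx q
  have h2 : (1 + q * (y / x - 1)) * x ^ q ≤ y ^ q := (le_div_iff₀ hxq).mp h
  have hx1 : x ^ (q - 1) * x = x ^ q := by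
    rw [Real.rpow_sub_one hx.ne', div_mul_cancel₀ _ hx.ne']
  have key : (1 + q * (y / x - 1)) * x ^ q
      = x ^ q + q * (x ^ (q-1) * y) - q * (x ^ (q-1) * x) := by
    rw [← hx1]; field_simp; ring
  rw [key] at h2
  nlinarith [h2, hx1]

open Real in
lemma my_bern2 {x y q : ℝ} (hy : 0 < y) (hxy : y ≤ x) (hq0 : 0 ≤ q) (hq : q ≤ 1) :
    q * x ^ (q - 1) * (x - y) ≤ x ^ q - y ^ q := by
  have hx : 0 < x := hy.trans_le hxy
  have hs : (-1:ℝ) ≤ y / x - 1 := by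
    have : 0 ≤ y / x := by positivity
    linarith
  have h := rpow_one_add_le_one_add_mul_self hs hq0 hq
  rw [show 1 + (y / x - 1) = y / x by ring, Real.div_rpow hy.le hx.le] at h
  have hxq : 0 < x ^ q := Real.rpow_pos_of_pos hx q
  have h2 : y ^ q ≤ (1 + q * (y / x - 1)) * x ^ q := (div_le_iff₀ hxq).mp h
  have hx1 : x ^ (q - 1) * x = x ^ q := by
    rw [Real.rpow_sub_one hx.ne', div_mul_cancel₀ _ hx.ne']
  have key : (1 + q * (y / x - 1)) * x ^ q
      = x ^ q + q * (x ^ (q-1) * y) - q * (x ^ (q-1) * x) := by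
    rw [← hx1]; field_simp; ring
  rw [key] at h2
  nlinarith [h2, hx1]

open Real in
lemma my_easy1 {x y q : ℝ} (hy : 0 < y) (hxy : y ≤ x) (hq : 1 ≤ q) :
    x ^ (q - 1) * (x - y) ≤ x ^ q - y ^ q := by
  have hx : 0 < x := hy.trans_le hxy
  have h1 : y ^ (q - 1) ≤ x ^ (q - 1) := Real.rpow_le_rpow hy.le hxy (by linarith)
  have hy1 : y ^ (q - 1) * y = y ^ q := by
    rw [Real.rpow_sub_one hy.ne', div_mul_cancel₀ _ hy.ne']
  have hx1 : x ^ (q - 1) * x = x ^ q := by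
    rw [Real.rpow_sub_one hx.ne', div_mul_cancel₀ _ hx.ne']
  nlinarith [mul_le_mul_of_nonneg_right h1 hy.le]

open Real in
lemma my_easy2 {x y q : ℝ} (hy : 0 < y) (hxy : y ≤ x) (hq : q ≤ 1) :
    x ^ q - y ^ q ≤ x ^ (q - 1) * (x - y) := by
  have hx : 0 < x := hy.trans_le hxy
  have h1 : x ^ (q - 1) ≤ y ^ (q - 1) := Real.rpow_le_rpow_of_nonpos hy hxy (by linarith)
  have hy1 : y ^ (q - 1) * y = y ^ q := by
    rw [Real.rpow_sub_one hy.ne', div_mul_cancel₀ _ hy.ne']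
  have hx1 : x ^ (q - 1) * x = x ^ q := by
    rw [Real.rpow_sub_one hx.ne', div_mul_cancel₀ _ hx.ne']
  nlinarith [mul_le_mul_of_nonneg_right h1 hy.le]

lemma my_Beval (p ε : ℝ) (hp : 1 < p) (hε : 0 < ε) (t : ℝ) :
    (∫ τ in (0:ℝ)..t, τ * (τ ^ 2 + ε) ^ ((p - 2) / 2))
      = ((t ^ 2 + ε) ^ (p / 2) - ε ^ (p / 2)) / p := by
  have hp0 : (0:ℝ) < p := by linarith
  have hderiv : ∀ x ∈ Set.uIcc (0:ℝ) t,
      HasDerivAt (fun x : ℝ => (x ^ 2 + ε) ^ (p / 2) / p)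
        (x * (x ^ 2 + ε) ^ ((p - 2) / 2)) x := by
    intro x _
    have h1 : HasDerivAt (fun x : ℝ => x ^ 2 + ε) (2 * x) x := by
      simpa using (hasDerivAt_pow 2 x).add_const ε
    have h2 := (h1.rpow_const (p := p / 2) (Or.inl (by positivity))).div_const p
    refine h2.congr_deriv ?_
    rw [show p / 2 - 1 = (p - 2) / 2 by ring]
    field_simp
  have hc : Continuous fun τ : ℝ => τ * (τ ^ 2 + ε) ^ ((p - 2) / 2) :=
    continuous_id.mul (((continuous_pow 2).add continuous_const).rpow_const
      fun x => Or.inl (by have : 0 < x ^ 2 + ε := by positivity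
                          exact this.ne'))
  rw [intervalIntegral.integral_eq_sub_of_hasDerivAt hderiv (hc.intervalIntegrable 0 t)]
  norm_num
  ring_nf
set_option maxHeartbeats 1000000 in
theorem stmt_10 (p ε : ℝ) (hp : 1 < p) (hε : 0 < ε) :
    ∀ c t : ℝ, 0 < c → 0 < t →
      min (min (2 * c) (2 * c ^ (p - 1))) (min (p * c) (p * c ^ (p - 1))) ≤
          t * ((c * t) * ((c * t) ^ 2 + ε) ^ ((p - 2) / 2)) /
            (∫ τ in (0:ℝ)..t, τ * (τ ^ 2 + ε) ^ ((p - 2) / 2)) ∧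
        t * ((c * t) * ((c * t) ^ 2 + ε) ^ ((p - 2) / 2)) /
            (∫ τ in (0:ℝ)..t, τ * (τ ^ 2 + ε) ^ ((p - 2) / 2)) ≤
          max (max (2 * c) (2 * c ^ (p - 1))) (max (p * c) (p * c ^ (p - 1))) := by
  intro c t hc ht
  have hp0 : (0:ℝ) < p := by linarith
  rw [my_Beval p ε hp hε t]
  set e := (p - 2) / 2 with he
  set X := t ^ 2 + ε with hXdef
  set Z := (c * t) ^ 2 + ε with hZdef
  have hX : (0:ℝ) < X := by positivity
  have hZ : (0:ℝ) < Z := by positivity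
  have hεX : ε ≤ X := by nlinarith [sq_nonneg t]
  have hεXlt : ε < X := by nlinarith
  set D := X ^ (p / 2) - ε ^ (p / 2) with hD
  have hDpos : 0 < D := sub_pos.mpr (Real.rpow_lt_rpow hε.le hεXlt (by linarith))
  have hBpos : 0 < D / p := div_pos hDpos hp0
  have hXε : X - ε = t ^ 2 := by rw [hXdef]; ring
  have hcp : c * c ^ (p - 2) = c ^ (p - 1) := by
    have h := Real.rpow_add hc 1 (p - 2)
    rw [Real.rpow_one, show (1:ℝ) + (p - 2) = p - 1 by ring] at h
    exact h.symm
  have hc2X : (c ^ 2 * X) ^ e = c ^ (p - 2) * X ^ e := by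
    rw [Real.mul_rpow (by positivity) hX.le, ← Real.rpow_natCast c 2,
      ← Real.rpow_mul hc.le]
    congr 1
    push_cast
    rw [he]; ring
  -- A bounds
  have hXe : (0:ℝ) ≤ X ^ e := Real.rpow_nonneg hX.le e
  have hA1 : min 1 (c ^ (p - 2)) * X ^ e ≤ Z ^ e := by
    rcases le_total c 1 with h1 | h1 <;> rcases le_total p 2 with h2 | h2
    · have hcsq : c ^ 2 ≤ 1 := by nlinarith
      have hZX : Z ≤ X := by nlinarith [sq_nonneg t]
      calc min 1 (c ^ (p - 2)) * X ^ e ≤ 1 * X ^ e :=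
            mul_le_mul_of_nonneg_right (min_le_left _ _) hXe
        _ = X ^ e := one_mul _
        _ ≤ Z ^ e := Real.rpow_le_rpow_of_nonpos hZ hZX (by rw [he]; linarith)
    · have hcsq : c ^ 2 ≤ 1 := by nlinarith
      have hcZ : c ^ 2 * X ≤ Z := by nlinarith [hε.le]
      calc min 1 (c ^ (p - 2)) * X ^ e ≤ c ^ (p - 2) * X ^ e :=
            mul_le_mul_of_nonneg_right (min_le_right _ _) hXe
        _ = (c ^ 2 * X) ^ e := hc2X.symm
        _ ≤ Z ^ e := Real.rpow_le_rpow (by positivity) hcZ (by rw [he]; linarith)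
    · have hcsq : (1:ℝ) ≤ c ^ 2 := by nlinarith
      have hcZ : Z ≤ c ^ 2 * X := by nlinarith [hε.le]
      calc min 1 (c ^ (p - 2)) * X ^ e ≤ c ^ (p - 2) * X ^ e :=
            mul_le_mul_of_nonneg_right (min_le_right _ _) hXe
        _ = (c ^ 2 * X) ^ e := hc2X.symm
        _ ≤ Z ^ e := Real.rpow_le_rpow_of_nonpos hZ hcZ (by rw [he]; linarith)
    · have hcsq : (1:ℝ) ≤ c ^ 2 := by nlinarith
      have hZX : X ≤ Z := by nlinarith [sq_nonneg t]
      calc min 1 (c ^ (p - 2)) * X ^ e ≤ 1 * X ^ e :=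
            mul_le_mul_of_nonneg_right (min_le_left _ _) hXe
        _ = X ^ e := one_mul _
        _ ≤ Z ^ e := Real.rpow_le_rpow hX.le hZX (by rw [he]; linarith)
  have hA2 : Z ^ e ≤ max 1 (c ^ (p - 2)) * X ^ e := by
    rcases le_total c 1 with h1 | h1 <;> rcases le_total p 2 with h2 | h2
    · have hcsq : c ^ 2 ≤ 1 := by nlinarith
      have hcZ : c ^ 2 * X ≤ Z := by nlinarith [hε.le]
      calc Z ^ e ≤ (c ^ 2 * X) ^ e :=
            Real.rpow_le_rpow_of_nonpos (by positivity) hcZ (by rw [he]; linarith)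
        _ = c ^ (p - 2) * X ^ e := hc2X
        _ ≤ max 1 (c ^ (p - 2)) * X ^ e :=
            mul_le_mul_of_nonneg_right (le_max_right _ _) hXe
    · have hcsq : c ^ 2 ≤ 1 := by nlinarith
      have hZX : Z ≤ X := by nlinarith [sq_nonneg t]
      calc Z ^ e ≤ X ^ e := Real.rpow_le_rpow hZ.le hZX (by rw [he]; linarith)
        _ ≤ max 1 (c ^ (p - 2)) * X ^ e := by
            nlinarith [mul_le_mul_of_nonneg_right (le_max_left 1 (c ^ (p - 2))) hXe]
    · have hcsq : (1:ℝ) ≤ c ^ 2 := by nlinarith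
      have hZX : X ≤ Z := by nlinarith [sq_nonneg t]
      calc Z ^ e ≤ X ^ e := Real.rpow_le_rpow_of_nonpos hX hZX (by rw [he]; linarith)
        _ ≤ max 1 (c ^ (p - 2)) * X ^ e := by
            nlinarith [mul_le_mul_of_nonneg_right (le_max_left 1 (c ^ (p - 2))) hXe]
    · have hcsq : (1:ℝ) ≤ c ^ 2 := by nlinarith
      have hcZ : Z ≤ c ^ 2 * X := by nlinarith [hε.le]
      calc Z ^ e ≤ (c ^ 2 * X) ^ e := Real.rpow_le_rpow hZ.le hcZ (by rw [he]; linarith)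
        _ = c ^ (p - 2) * X ^ e := hc2X
        _ ≤ max 1 (c ^ (p - 2)) * X ^ e :=
            mul_le_mul_of_nonneg_right (le_max_right _ _) hXe
  -- B bounds
  have hq2 : p / 2 - 1 = e := by rw [he]; ring
  have hB1 : min 2 p * (D / p) ≤ t ^ 2 * X ^ e := by
    rw [mul_div_assoc', div_le_iff₀ hp0]
    rcases le_total p 2 with h2 | h2
    · have h := my_easy2 (q := p / 2) hε hεX (by linarith)
      rw [hq2] at h
      rw [min_eq_right h2]
      calc p * D ≤ p * (X ^ e * (X - ε)) :=
            mul_le_mul_of_nonneg_left h hp0.le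
        _ = t ^ 2 * X ^ e * p := by rw [hXε]; ring
    · have h := my_bern1 (q := p / 2) hε hεX (by linarith)
      rw [hq2] at h
      rw [min_eq_left h2]
      calc 2 * D ≤ 2 * (p / 2 * X ^ e * (X - ε)) := by linarith
        _ = t ^ 2 * X ^ e * p := by rw [hXε]; ring
  have hB2 : t ^ 2 * X ^ e ≤ max 2 p * (D / p) := by
    rw [mul_div_assoc', le_div_iff₀ hp0]
    rcases le_total p 2 with h2 | h2
    · have h := my_bern2 (q := p / 2) hε hεX (by linarith) (by linarith)
      rw [hq2] at h
      rw [max_eq_left h2]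
      calc t ^ 2 * X ^ e * p = 2 * (p / 2 * X ^ e * (X - ε)) := by rw [hXε]; ring
        _ ≤ 2 * D := by linarith
    · have h := my_easy1 (q := p / 2) hε hεX (by linarith)
      rw [hq2] at h
      rw [max_eq_right h2]
      calc t ^ 2 * X ^ e * p = p * (X ^ e * (X - ε)) := by rw [hXε]; ring
        _ ≤ p * D := mul_le_mul_of_nonneg_left h hp0.le
  -- min/max algebra
  have hm' : (0:ℝ) ≤ min c (c ^ (p - 1)) :=
    le_min hc.le (Real.rpow_nonneg hc.le _)
  have hminEq : min (min (2 * c) (2 * c ^ (p - 1))) (min (p * c) (p * c ^ (p - 1)))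
      = min 2 p * min c (c ^ (p - 1)) := by
    rw [min_mul_of_nonneg _ _ hm', mul_min_of_nonneg _ _ (by norm_num : (0:ℝ) ≤ 2),
      mul_min_of_nonneg _ _ hp0.le]
  have hmaxEq : max (max (2 * c) (2 * c ^ (p - 1))) (max (p * c) (p * c ^ (p - 1)))
      = max 2 p * max c (c ^ (p - 1)) := by
    rw [max_mul_of_nonneg _ _ (hc.le.trans (le_max_left _ _)), mul_max_of_nonneg _ _ (by norm_num : (0:ℝ) ≤ 2),
      mul_max_of_nonneg _ _ hp0.le]
  have hm'c : min c (c ^ (p - 1)) = c * min 1 (c ^ (p - 2)) := by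
    rw [mul_min_of_nonneg _ _ hc.le, mul_one, hcp]
  have hM'c : max c (c ^ (p - 1)) = c * max 1 (c ^ (p - 2)) := by
    rw [mul_max_of_nonneg _ _ hc.le, mul_one, hcp]
  constructor
  · rw [hminEq, le_div_iff₀ hBpos]
    calc min 2 p * min c (c ^ (p - 1)) * (D / p)
        = min c (c ^ (p - 1)) * (min 2 p * (D / p)) := by ring
      _ ≤ min c (c ^ (p - 1)) * (t ^ 2 * X ^ e) :=
          mul_le_mul_of_nonneg_left hB1 hm'
      _ = (c * t ^ 2) * (min 1 (c ^ (p - 2)) * X ^ e) := by rw [hm'c]; ring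
      _ ≤ (c * t ^ 2) * Z ^ e :=
          mul_le_mul_of_nonneg_left hA1 (by positivity)
      _ = t * (c * t * Z ^ e) := by ring
  · rw [hmaxEq, div_le_iff₀ hBpos]
    calc t * (c * t * Z ^ e) = (c * t ^ 2) * Z ^ e := by ring
      _ ≤ (c * t ^ 2) * (max 1 (c ^ (p - 2)) * X ^ e) :=
          mul_le_mul_of_nonneg_left hA2 (by positivity)
      _ = max c (c ^ (p - 1)) * (t ^ 2 * X ^ e) := by rw [hM'c]; ring
      _ ≤ max c (c ^ (p - 1)) * (max 2 p * (D / p)) :=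
          mul_le_mul_of_nonneg_left hB2 (hm'.trans (min_le_max))
      _ = max 2 p * max c (c ^ (p - 1)) * (D / p) := by ring
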